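/- arXiv:1801.09327 — 3 statements merged into one kernel-verified Lean document; each statement's English description precedes it below -/
import Mathlib

section
/- Fix an integer k ≥ 1. Define c : ℕ → ℕ → ℤ by c i n = binom(i+k−1, i) if i = n; c i n = binom(i+k−1, i) + (if i ≥ 1 then binom(i+k−2, i−1) else 0) if i < n; and c i n = 0 if i > n. Then in the formal power series ring ℤ[[x,y]] one has (1 − y) · (1 − x·y)^k · (∑_{i,n≥0} c i n · x^i y^n) = 1 + x·y². (These c i n are the Betti numbers rk H^i(C_n(ℂ∖k),ℤ) of the unordered configuration spaces of the plane with k points removed, whose generating series is (1+xy²)/((1−y)(1−xy)^k).) -/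
/-- The bivariate generating series `∑_{i,n ≥ 0} c i n · x^i y^n ∈ ℤ[[x,y]]`
associated to a doubly-indexed integer sequence `c`. -/
def genSeries (c : ℕ → ℕ → ℤ) : MvPowerSeries (Fin 2) ℤ :=
  fun d => c (d 0) (d 1)

/-- The Betti numbers `rk H^i(C_n(ℂ∖k), ℤ)` of unordered configuration spaces
of the plane with `k` points removed. -/
def betti (k i n : ℕ) : ℤ :=
  if i = n then ((i + k - 1).choose i : ℤ)
  else if i < n then
    ((i + k - 1).choose i : ℤ) + (if 1 ≤ i then ((i + k - 2).choose (i - 1) : ℤ) else 0)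
  else 0

open MvPowerSeries Finsupp

/-- The diagonal series `∑ binom(i+k-1,i) (xy)^i`. -/
def Adiag (k : ℕ) : MvPowerSeries (Fin 2) ℤ :=
  fun d => if d 0 = d 1 then ((d 0 + k - 1).choose (d 0) : ℤ) else 0

lemma coeff_Adiag (k : ℕ) (d : Fin 2 →₀ ℕ) :
    MvPowerSeries.coeff d (Adiag k) =
      if d 0 = d 1 then ((d 0 + k - 1).choose (d 0) : ℤ) else 0 := rfl

lemma coeff_genSeries (c : ℕ → ℕ → ℤ) (d : Fin 2 →₀ ℕ) :
    MvPowerSeries.coeff d (genSeries c) = c (d 0) (d 1) := rfl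

lemma XX_eq : (MvPowerSeries.X 0 * MvPowerSeries.X 1 : MvPowerSeries (Fin 2) ℤ) =
    MvPowerSeries.monomial (single 0 1 + single 1 1) 1 := by
  rw [MvPowerSeries.X, MvPowerSeries.X, MvPowerSeries.monomial_mul_monomial, one_mul]

lemma XY2_eq : (MvPowerSeries.X 0 * MvPowerSeries.X 1 ^ 2 : MvPowerSeries (Fin 2) ℤ) =
    MvPowerSeries.monomial (single 0 1 + single 1 2) 1 := by
  rw [MvPowerSeries.X, MvPowerSeries.X_pow_eq, MvPowerSeries.monomial_mul_monomial, one_mul]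

lemma Y_eq : (MvPowerSeries.X 1 : MvPowerSeries (Fin 2) ℤ) =
    MvPowerSeries.monomial (single 1 1) 1 := rfl

lemma le_pair_iff (a b : ℕ) (d : Fin 2 →₀ ℕ) :
    (single 0 a + single 1 b : Fin 2 →₀ ℕ) ≤ d ↔ a ≤ d 0 ∧ b ≤ d 1 := by
  rw [Finsupp.le_def, Fin.forall_fin_two]
  simp [Finsupp.single_apply]

lemma sub_pair_apply0 (a b : ℕ) (d : Fin 2 →₀ ℕ) :
    (d - (single 0 a + single 1 b) : Fin 2 →₀ ℕ) 0 = d 0 - a := by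
  simp [Finsupp.tsub_apply, Finsupp.single_apply]

lemma sub_pair_apply1 (a b : ℕ) (d : Fin 2 →₀ ℕ) :
    (d - (single 0 a + single 1 b) : Fin 2 →₀ ℕ) 1 = d 1 - b := by
  simp [Finsupp.tsub_apply, Finsupp.single_apply]

lemma sub_single1_apply0 (d : Fin 2 →₀ ℕ) :
    (d - (single 1 1 : Fin 2 →₀ ℕ) : Fin 2 →₀ ℕ) 0 = d 0 := by
  simp [Finsupp.tsub_apply, Finsupp.single_apply]

lemma sub_single1_apply1 (d : Fin 2 →₀ ℕ) :
    (d - (single 1 1 : Fin 2 →₀ ℕ) : Fin 2 →₀ ℕ) 1 = d 1 - 1 := by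
  simp [Finsupp.tsub_apply, Finsupp.single_apply]

lemma pascal (k j : ℕ) : ((j + 1 + k).choose (j + 1) : ℤ) =
    ((j + k).choose (j + 1) : ℤ) + ((j + k).choose j : ℤ) := by
  have h : j + 1 + k = (j + k) + 1 := by omega
  rw [h, Nat.choose_succ_succ]
  push_cast
  ring

lemma key1 (k i n : ℕ) :
    (if i = n then ((i + k).choose i : ℤ) else 0) -
      (if 1 ≤ i ∧ 1 ≤ n then
        (if i - 1 = n - 1 then ((i - 1 + k).choose (i - 1) : ℤ) else 0) else 0) =
    if i = n then ((i + k - 1).choose i : ℤ) else 0 := by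
  rcases eq_or_ne i n with rfl | h
  · rcases Nat.eq_zero_or_pos i with rfl | h0
    · simp
    · obtain ⟨j, rfl⟩ : ∃ j, i = j + 1 := ⟨i - 1, by omega⟩
      split_ifs
      all_goals try (exfalso; omega)
      have e2 : j + 1 - 1 = j := by omega
      have e3 : j + 1 + k - 1 = j + k := by omega
      rw [e2, e3, pascal k j]
      ring
  · rw [if_neg h, if_neg h]
    split_ifs
    all_goals try (exfalso; omega)
    all_goals ring

lemma key2 (k i n : ℕ) :
    betti k i n - (if 1 ≤ n then betti k i (n - 1) else 0) =
    (if i = n then ((i + k - 1).choose i : ℤ) else 0) +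
      (if 1 ≤ i ∧ 2 ≤ n then
        (if i - 1 = n - 2 then ((i - 1 + k - 1).choose (i - 1) : ℤ) else 0) else 0) := by
  unfold betti
  rcases lt_trichotomy i n with h | rfl | h
  · split_ifs
    all_goals try (exfalso; omega)
    all_goals try ring
    all_goals
      (have e : i + k - 2 = i - 1 + k - 1 := by omega
       rw [e]; ring)
  · split_ifs
    all_goals try (exfalso; omega)
    all_goals ring
  · split_ifs
    all_goals try (exfalso; omega)
    all_goals ring

lemma step_Adiag (k : ℕ) :
    (1 - MvPowerSeries.X 0 * MvPowerSeries.X 1) * Adiag (k + 1) = Adiag k := by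
  apply MvPowerSeries.ext
  intro d
  rw [sub_mul, one_mul, map_sub, XX_eq, MvPowerSeries.coeff_monomial_mul,
    coeff_Adiag, coeff_Adiag]
  have hc : ∀ m : ℕ, m + (k + 1) - 1 = m + k := fun m => by omega
  simp only [le_pair_iff, sub_pair_apply0, sub_pair_apply1, one_mul, hc]
  exact key1 k (d 0) (d 1)

lemma pow_mul_Adiag (k : ℕ) :
    (1 - MvPowerSeries.X 0 * MvPowerSeries.X 1) ^ k * Adiag k = 1 := by
  induction k with
  | zero =>
    rw [pow_zero, one_mul]
    apply MvPowerSeries.ext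
    intro d
    rw [coeff_Adiag, MvPowerSeries.coeff_one]
    rcases eq_or_ne d 0 with rfl | h
    · simp
    · rw [if_neg h]
      have hd : d 0 ≠ 0 ∨ d 1 ≠ 0 := by
        by_contra hc
        push_neg at hc
        exact h (by
          ext a
          fin_cases a
          · exact hc.1
          · exact hc.2)
      split_ifs with h2
      · have h3 : d 0 ≠ 0 := by omega
        rw [Nat.choose_eq_zero_of_lt (show d 0 + 0 - 1 < d 0 by omega), Nat.cast_zero]
      · rfl
  | succ n ih =>
    calc (1 - MvPowerSeries.X 0 * MvPowerSeries.X 1) ^ (n + 1) * Adiag (n + 1)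
        = (1 - MvPowerSeries.X 0 * MvPowerSeries.X 1) ^ n *
            ((1 - MvPowerSeries.X 0 * MvPowerSeries.X 1) * Adiag (n + 1)) := by ring
      _ = (1 - MvPowerSeries.X 0 * MvPowerSeries.X 1) ^ n * Adiag n := by rw [step_Adiag]
      _ = 1 := ih

lemma one_sub_Y_mul (k : ℕ) :
    (1 - MvPowerSeries.X 1) * genSeries (betti k) =
      (1 + MvPowerSeries.X 0 * MvPowerSeries.X 1 ^ 2) * Adiag k := by
  apply MvPowerSeries.ext
  intro d
  rw [sub_mul, one_mul, map_sub, add_mul, one_mul, map_add, XY2_eq, Y_eq,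
    MvPowerSeries.coeff_monomial_mul, MvPowerSeries.coeff_monomial_mul,
    coeff_genSeries, coeff_genSeries, coeff_Adiag, coeff_Adiag]
  simp only [le_pair_iff, Finsupp.single_le_iff, sub_pair_apply0, sub_pair_apply1,
    sub_single1_apply0, sub_single1_apply1, one_mul]
  exact key2 k (d 0) (d 1)

/-- The generating series of the Betti numbers of `C_n(ℂ∖k)` is
`(1 + xy²) / ((1 - y)(1 - xy)^k)`. -/
theorem betti_generating_function (k : ℕ) (hk : 1 ≤ k) :
    (1 - MvPowerSeries.X 1) * (1 - MvPowerSeries.X 0 * MvPowerSeries.X 1) ^ k *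
      genSeries (betti k) =
    1 + MvPowerSeries.X 0 * MvPowerSeries.X 1 ^ 2 := by
  have h1 := pow_mul_Adiag k
  have h2 := one_sub_Y_mul k
  calc (1 - MvPowerSeries.X 1) * (1 - MvPowerSeries.X 0 * MvPowerSeries.X 1) ^ k *
      genSeries (betti k)
      = (1 - MvPowerSeries.X 0 * MvPowerSeries.X 1) ^ k *
          ((1 - MvPowerSeries.X 1) * genSeries (betti k)) := by ring
    _ = (1 - MvPowerSeries.X 0 * MvPowerSeries.X 1) ^ k *
          ((1 + MvPowerSeries.X 0 * MvPowerSeries.X 1 ^ 2) * Adiag k) := by rw [h2]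
    _ = (1 + MvPowerSeries.X 0 * MvPowerSeries.X 1 ^ 2) *
          ((1 - MvPowerSeries.X 0 * MvPowerSeries.X 1) ^ k * Adiag k) := by ring
    _ = 1 + MvPowerSeries.X 0 * MvPowerSeries.X 1 ^ 2 := by rw [h1, mul_one]
end

section
/- Fix an integer k ≥ 1. For n ∈ ℕ define the polynomial S n ∈ ℤ[x] by S n = ∑_{j=0}^{n} (−1)^j · binom(j+k−1, j) · x^{2(n−j)} − ∑_{j=0}^{n−2} (−1)^j · binom(j+k−1, j) · x^{2(n−1−j)} (the second sum being empty for n < 2). Then in the ring (ℤ[x])[[y]] one has (1 − x²·y) · (1 + y)^k · (∑_{n≥0} S n · y^n) = 1 − x²·y². (The polynomials S n are the virtual Poincaré polynomials S(C_n(ℂ∖k)), whose generating series by Getzler's theorem is (1−y²x²)/((1−yx²)(1+y)^k).) -/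
/-- The virtual Poincaré polynomial `S(C_n(ℂ∖k)) ∈ ℤ[x]` of the unordered
configuration space of `n` points in the plane with `k` points removed. -/
noncomputable def virtualPoincare (k n : ℕ) : Polynomial ℤ :=
  (∑ j ∈ Finset.range (n + 1),
      Polynomial.C ((-1 : ℤ) ^ j * ((j + k - 1).choose j : ℤ)) * Polynomial.X ^ (2 * (n - j))) -
  ∑ j ∈ Finset.range (n - 1),
      Polynomial.C ((-1 : ℤ) ^ j * ((j + k - 1).choose j : ℤ)) * Polynomial.X ^ (2 * (n - 1 - j))

open PowerSeries Polynomial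

private noncomputable def gA (k : ℕ) : PowerSeries (Polynomial ℤ) :=
  PowerSeries.mk fun j => Polynomial.C ((-1 : ℤ) ^ j * ((j + k - 1).choose j : ℤ))

private noncomputable def gG : PowerSeries (Polynomial ℤ) :=
  PowerSeries.mk fun n => (Polynomial.X : Polynomial ℤ) ^ (2 * n)

private lemma gG_inv :
    (1 - PowerSeries.C (R := Polynomial ℤ) (Polynomial.X ^ 2) * PowerSeries.X) * gG = 1 := by
  ext n
  rw [sub_mul, one_mul, map_sub, mul_assoc]
  cases n with
  | zero => simp [gG]
  | succ n =>
    rw [PowerSeries.coeff_C_mul, PowerSeries.coeff_succ_X_mul]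
    simp [gG, pow_succ, pow_mul, mul_comm]
    ring

private lemma gA_inv (k : ℕ) (hk : 1 ≤ k) :
    (1 + PowerSeries.X) ^ k * gA k = 1 := by
  have h := (PowerSeries.invOneSubPow (Polynomial ℤ) k).inv_val
  rw [PowerSeries.invOneSubPow_inv_eq_one_sub_pow,
    PowerSeries.invOneSubPow_val_eq_mk_sub_one_add_choose_of_pos _ _ hk] at h
  have h2 := congrArg (PowerSeries.rescale (-1 : Polynomial ℤ)) h
  rw [map_mul, map_one, map_pow, map_sub, map_one, PowerSeries.rescale_neg_one_X,
    sub_neg_eq_add, PowerSeries.rescale_mk] at h2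
  have hA : gA k = PowerSeries.mk fun n : ℕ =>
      (-1 : Polynomial ℤ) ^ n * (((k - 1 + n).choose (k - 1) : ℕ) : Polynomial ℤ) := by
    apply PowerSeries.ext
    intro j
    simp only [gA, PowerSeries.coeff_mk]
    rw [map_mul, map_pow, map_neg, map_one, map_natCast]
    congr 2
    rw [show j + k - 1 = k - 1 + j by omega]
    have := Nat.choose_symm (show k - 1 ≤ k - 1 + j by omega)
    rw [show k - 1 + j - (k - 1) = j by omega] at this
    exact this
  rw [hA]
  exact h2

private lemma mk_vp (k : ℕ) (hk : 1 ≤ k) :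
    PowerSeries.mk (virtualPoincare k) =
      gA k * ((1 - PowerSeries.X) * gG + PowerSeries.X) := by
  have hexp : gA k * ((1 - PowerSeries.X) * gG + PowerSeries.X)
      = gA k * gG - PowerSeries.X * (gA k * gG) + PowerSeries.X * gA k := by ring
  rw [hexp]
  ext n
  have hAG : ∀ m : ℕ, PowerSeries.coeff (R := Polynomial ℤ) m (gA k * gG) =
      ∑ j ∈ Finset.range (m + 1),
        Polynomial.C ((-1 : ℤ) ^ j * ((j + k - 1).choose j : ℤ)) * Polynomial.X ^ (2 * (m - j)) := by
    intro m
    rw [PowerSeries.coeff_mul, Finset.Nat.sum_antidiagonal_eq_sum_range_succ_mk]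
    simp [gA, gG]
  rw [PowerSeries.coeff_mk, map_add, map_sub]
  cases n with
  | zero =>
    simp [virtualPoincare, hAG 0]
  | succ n =>
    rw [PowerSeries.coeff_succ_X_mul, PowerSeries.coeff_succ_X_mul, hAG, hAG]
    simp only [virtualPoincare, gA, PowerSeries.coeff_mk]
    have h1 : ∑ j ∈ Finset.range (n + 1),
        Polynomial.C ((-1 : ℤ) ^ j * ((j + k - 1).choose j : ℤ)) * Polynomial.X ^ (2 * (n - j))
        = (∑ j ∈ Finset.range n,
          Polynomial.C ((-1 : ℤ) ^ j * ((j + k - 1).choose j : ℤ)) * Polynomial.X ^ (2 * (n - j)))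
          + Polynomial.C ((-1 : ℤ) ^ n * ((n + k - 1).choose n : ℤ)) := by
      rw [Finset.sum_range_succ]
      simp
    rw [h1]
    have h2 : n + 1 - 1 = n := rfl
    rw [h2]
    congr 1
    ring

/-- Getzler's theorem: the generating series of the virtual Poincaré polynomials of
`C_n(ℂ∖k)` is `(1 - y²x²) / ((1 - yx²)(1 + y)^k)`, as an identity in `(ℤ[x])[[y]]`. -/
theorem getzler_generating_function (k : ℕ) (hk : 1 ≤ k) :
    (1 - PowerSeries.C (R := Polynomial ℤ) (Polynomial.X ^ 2) * PowerSeries.X) *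
      (1 + PowerSeries.X) ^ k * PowerSeries.mk (virtualPoincare k) =
    1 - PowerSeries.C (R := Polynomial ℤ) (Polynomial.X ^ 2) * PowerSeries.X ^ 2 := by
  rw [mk_vp k hk]
  have key : (1 - PowerSeries.C (R := Polynomial ℤ) (Polynomial.X ^ 2) * PowerSeries.X) *
      ((1 - PowerSeries.X) * gG + PowerSeries.X) =
      (1 - PowerSeries.X) *
        ((1 - PowerSeries.C (R := Polynomial ℤ) (Polynomial.X ^ 2) * PowerSeries.X) * gG) +
      (1 - PowerSeries.C (R := Polynomial ℤ) (Polynomial.X ^ 2) * PowerSeries.X) * PowerSeries.X := by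
    ring
  calc (1 - PowerSeries.C (R := Polynomial ℤ) (Polynomial.X ^ 2) * PowerSeries.X) *
      (1 + PowerSeries.X) ^ k * (gA k * ((1 - PowerSeries.X) * gG + PowerSeries.X))
      = ((1 + PowerSeries.X) ^ k * gA k) *
        ((1 - PowerSeries.C (R := Polynomial ℤ) (Polynomial.X ^ 2) * PowerSeries.X) *
          ((1 - PowerSeries.X) * gG + PowerSeries.X)) := by ring
    _ = 1 - PowerSeries.C (R := Polynomial ℤ) (Polynomial.X ^ 2) * PowerSeries.X ^ 2 := by
        rw [gA_inv k hk, one_mul, key, gG_inv]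
        ring
end

section
/- Fix an integer k ≥ 1 and n ∈ ℕ. Define real-valued functions: P n (u) = binom(n+k−1, n)·u^n + ∑_{i=0}^{n−1} (binom(i+k−1, i) + (if i ≥ 1 then binom(i+k−2, i−1) else 0))·u^i, and S n (x) = ∑_{j=0}^{n} (−1)^j · binom(j+k−1, j) · x^{2(n−j)} − ∑_{j=0}^{n−2} (−1)^j · binom(j+k−1, j) · x^{2(n−1−j)}. Then for every real number x ≠ 0, S n (x) = x^{2n} · P n (−1/x²). (This is the duality between the Poincaré polynomial P(C_n(ℂ∖k)) and the virtual Poincaré polynomial S(C_n(ℂ∖k)) of unordered configuration spaces under the substitution x → −1/x², y → yx².) -/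
/-- Duality between the Poincaré polynomial `P(C_n(ℂ∖k))` and the virtual Poincaré
polynomial `S(C_n(ℂ∖k))` of unordered configuration spaces under the substitution
`x → -1/x²`, `y → yx²`: one has `S n (x) = x^(2n) · P n (-1/x²)` for `x ≠ 0`. -/
theorem unordered_duality (k : ℕ) (hk : 1 ≤ k) (n : ℕ) (P S : ℝ → ℝ)
    (hP : ∀ u : ℝ, P u = ((n + k - 1).choose n : ℝ) * u ^ n +
      ∑ i ∈ Finset.range n,
        (((i + k - 1).choose i : ℝ) +
          (if 1 ≤ i then ((i + k - 2).choose (i - 1) : ℝ) else 0)) * u ^ i)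
    (hS : ∀ x : ℝ, S x =
      (∑ j ∈ Finset.range (n + 1),
        (-1 : ℝ) ^ j * ((j + k - 1).choose j : ℝ) * x ^ (2 * (n - j))) -
      ∑ j ∈ Finset.range (n - 1),
        (-1 : ℝ) ^ j * ((j + k - 1).choose j : ℝ) * x ^ (2 * (n - 1 - j))) :
    ∀ x : ℝ, x ≠ 0 → S x = x ^ (2 * n) * P (-1 / x ^ 2) := by
  intro x hx
  have hx2 : (x : ℝ) ^ 2 ≠ 0 := pow_ne_zero _ hx
  have key : ∀ i : ℕ, i ≤ n → x ^ (2*n) * (-1/x^2)^i = (-1:ℝ)^i * x^(2*(n-i)) := by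
    intro i hi
    have h : x ^ (2*n) = x ^ (2*(n-i)) * (x^2)^i := by
      rw [← pow_mul, ← pow_add]; congr 1; omega
    rw [div_pow, h]
    field_simp [pow_ne_zero i hx2]
  have hterm : ∀ (c : ℝ) (i : ℕ), i ≤ n →
      x^(2*n) * (c * (-1/x^2)^i) = c * ((-1:ℝ)^i * x^(2*(n-i))) := by
    intro c i hi; rw [mul_left_comm, key i hi]
  rw [hS x, hP, mul_add, Finset.mul_sum, hterm _ n le_rfl]
  rw [Finset.sum_congr rfl (fun i hi => hterm _ i (le_of_lt (Finset.mem_range.mp hi)))]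
  rcases n with _ | m
  · simp
  · rw [Finset.sum_range_succ]
    have hsplit : ∑ i ∈ Finset.range (m+1),
        ((((i + k - 1).choose i : ℝ) +
          (if 1 ≤ i then ((i + k - 2).choose (i - 1) : ℝ) else 0)) *
          ((-1:ℝ)^i * x^(2*(m+1-i))))
        = (∑ i ∈ Finset.range (m+1),
            ((i + k - 1).choose i : ℝ) * ((-1:ℝ)^i * x^(2*(m+1-i))))
          + ∑ i ∈ Finset.range (m+1),
            (if 1 ≤ i then ((i + k - 2).choose (i - 1) : ℝ) else 0) *
              ((-1:ℝ)^i * x^(2*(m+1-i))) := by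
      rw [← Finset.sum_add_distrib]
      exact Finset.sum_congr rfl (fun i _ => by ring)
    have hb : ∑ i ∈ Finset.range (m+1),
        (if 1 ≤ i then ((i + k - 2).choose (i - 1) : ℝ) else 0) *
          ((-1:ℝ)^i * x^(2*(m+1-i)))
        = - ∑ j ∈ Finset.range (m+1-1),
            (-1 : ℝ) ^ j * ((j + k - 1).choose j : ℝ) * x ^ (2 * (m+1 - 1 - j)) := by
      rw [Finset.sum_range_succ']
      simp only [Nat.add_sub_cancel]
      rw [← Finset.sum_neg_distrib]
      have : (if (1:ℕ) ≤ 0 then (((0:ℕ) + k - 2).choose (0 - 1) : ℝ) else 0) = 0 := by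
        norm_num
      rw [this, zero_mul, add_zero]
      refine Finset.sum_congr rfl (fun j hj => ?_)
      have h1 : j + 1 + k - 2 = j + k - 1 := by omega
      have h2 : j + 1 - 1 = j := by omega
      have h3 : m + 1 - (j + 1) = m - j := by omega
      have h5 : m + 1 - 1 - j = m - j := by omega
      simp only [h1, h2, h3, h5, if_pos (Nat.le_add_left 1 j), pow_succ]
      ring
    rw [hsplit, hb]
    have ha : ∑ i ∈ Finset.range (m+1), (-1:ℝ)^i * ((i+k-1).choose i : ℝ) * x^(2*(m+1-i))
        = ∑ i ∈ Finset.range (m+1), ((i+k-1).choose i : ℝ) * ((-1:ℝ)^i * x^(2*(m+1-i))) :=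
      Finset.sum_congr rfl (fun i _ => by ring)
    rw [ha]
    simp only [Nat.sub_self, mul_zero, pow_zero]
    ring
end
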